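/- Let I be a monomial ideal generated in degree d, let k ≥ 1, and suppose for every 1 ≤ w ≤ k−1 and all a, b ∈ 𝒢(I^w) there is a path in G_{I^w}^{a,b} connecting a and b. Let u = u₁⋯u_k and v = v₁⋯v_k be minimal generators of I^k (u_i, v_j ∈ 𝒢(I)) lying in distinct connected components of G_{I^k}^{u,v}. Then u_i ≠ v_j for all i, j, i.e., the multisets {u₁,…,u_k} and {v₁,…,v_k} are disjoint as sets of generators. -/

import Mathlib

open Finset

/-- A monomial in `n` variables, given by its exponent vector. -/
abbrev Mon (n : ℕ) := Fin n → ℕ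

/-- Degree of a monomial. -/
def mdeg {n : ℕ} (u : Mon n) : ℕ := ∑ i, u i

/-- Divisibility of monomials. -/
def mdvd {n : ℕ} (u v : Mon n) : Prop := ∀ i, u i ≤ v i

/-- Least common multiple of monomials. -/
def mlcm {n : ℕ} (u v : Mon n) : Mon n := fun i => max (u i) (v i)

/-- Products of `k` generators taken from `S`, i.e. the (not necessarily minimal)
monomial generators of `I^k` where `I` is generated by `S`.
(Products of monomials correspond to sums of exponent vectors.) -/
def powGen {n : ℕ} (S : Finset (Mon n)) (k : ℕ) : Set (Mon n) :=
  { m | ∃ f : Fin k → Mon n, (∀ i, f i ∈ S) ∧ m = ∑ i, f i }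

/-- The minimal monomial generating set `𝒢(I^k)`. -/
def minGen {n : ℕ} (S : Finset (Mon n)) (k : ℕ) : Set (Mon n) :=
  { m | m ∈ powGen S k ∧ ∀ m' ∈ powGen S k, mdvd m' m → m' = m }

/-- Adjacency in the graph `G_{I^k}^{u,v}`: both endpoints are minimal generators of `I^k`
dividing `lcm(u,v)`, and the degree of their lcm is `d·k + 1`. -/
def adj {n : ℕ} (S : Finset (Mon n)) (d k : ℕ) (u v a b : Mon n) : Prop :=
  a ∈ minGen S k ∧ b ∈ minGen S k ∧
    mdvd a (mlcm u v) ∧ mdvd b (mlcm u v) ∧ mdeg (mlcm a b) = d * k + 1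

/-- `a` and `b` are connected by a path in `G_{I^k}^{u,v}`. -/
def connectedIn {n : ℕ} (S : Finset (Mon n)) (d k : ℕ) (u v a b : Mon n) : Prop :=
  Relation.ReflTransGen (adj S d k u v) a b


lemma mdeg_sum {n k : ℕ} (f : Fin k → Mon n) : mdeg (∑ i, f i) = ∑ i, mdeg (f i) := by
  simp only [mdeg, Finset.sum_apply]
  exact Finset.sum_comm


lemma mdeg_add {n : ℕ} (a b : Mon n) : mdeg (a + b) = mdeg a + mdeg b := by
  simp [mdeg, Finset.sum_add_distrib]

lemma powGen_mdeg {n k d : ℕ} {S : Finset (Mon n)} (hS : ∀ m ∈ S, mdeg m = d)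
    {m : Mon n} (hm : m ∈ powGen S k) : mdeg m = d * k := by
  obtain ⟨f, hf, rfl⟩ := hm
  rw [mdeg_sum]
  rw [Finset.sum_congr rfl (fun i _ => hS _ (hf i))]
  simp [mul_comm]

lemma mem_minGen_of_powGen {n k d : ℕ} {S : Finset (Mon n)} (hS : ∀ m ∈ S, mdeg m = d)
    {m : Mon n} (hm : m ∈ powGen S k) : m ∈ minGen S k := by
  refine ⟨hm, fun m' hm' hdvd => ?_⟩
  have h1 : mdeg m' = mdeg m := by
    rw [powGen_mdeg hS hm, powGen_mdeg hS hm']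
  simp only [mdeg] at h1
  funext t
  have := (Finset.sum_eq_sum_iff_of_le (fun i (_ : i ∈ Finset.univ) => hdvd i)).mp h1
  exact this t (Finset.mem_univ t)

lemma add_mem_powGen {n k : ℕ} {S : Finset (Mon n)} {c a : Mon n}
    (hc : c ∈ S) (ha : a ∈ powGen S k) : c + a ∈ powGen S (k + 1) := by
  obtain ⟨f, hf, rfl⟩ := ha
  refine ⟨Fin.cons c f, fun i => ?_, ?_⟩
  · refine Fin.cases ?_ ?_ i <;> simp [hc, hf]
  · rw [Fin.sum_univ_succ]
    simp

lemma mlcm_add_left {n : ℕ} (c a b : Mon n) : mlcm (c + a) (c + b) = c + mlcm a b := by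
  funext t
  simp [mlcm, Pi.add_apply]

theorem stmt14 {n k : ℕ} (d : ℕ) (hk : 1 ≤ k) (S : Finset (Mon n))
    (hS : ∀ m ∈ S, mdeg m = d)
    (hind : ∀ w, 1 ≤ w → w ≤ k - 1 →
      ∀ a ∈ minGen S w, ∀ b ∈ minGen S w, connectedIn S d w a b a b)
    (u v : Mon n) (uu vv : Fin k → Mon n)
    (huS : ∀ i, uu i ∈ S) (hvS : ∀ i, vv i ∈ S)
    (hue : u = ∑ i, uu i) (hve : v = ∑ i, vv i)
    (hum : u ∈ minGen S k) (hvm : v ∈ minGen S k)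
    (hdisc : ¬ connectedIn S d k u v u v) :
    ∀ i j, uu i ≠ vv j := by
  intro i j hij
  apply hdisc
  obtain ⟨w, rfl⟩ : ∃ w, k = w + 1 := ⟨k - 1, by omega⟩
  set c := uu i with hc
  set u' := ∑ t : Fin w, uu (i.succAbove t) with hu'
  set v' := ∑ t : Fin w, vv (j.succAbove t) with hv'
  have hu : u = c + u' := by rw [hue, Fin.sum_univ_succAbove uu i]
  have hv : v = c + v' := by rw [hve, Fin.sum_univ_succAbove vv j, ← hij]
  rcases Nat.eq_zero_or_pos w with hw | hw
  · subst hw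
    have : u = v := by
      rw [hu, hv, hu', hv']
      simp
    rw [this]
    exact Relation.ReflTransGen.refl
  · have hu'p : u' ∈ powGen S w := ⟨_, fun t => huS _, rfl⟩
    have hv'p : v' ∈ powGen S w := ⟨_, fun t => hvS _, rfl⟩
    have hpath := hind w hw (by omega) u' (mem_minGen_of_powGen hS hu'p)
      v' (mem_minGen_of_powGen hS hv'p)
    rw [hu, hv]
    refine hpath.lift (fun x => c + x) ?_
    rintro a b ⟨ham, hbm, hadv, hbdv, hdeg⟩
    refine ⟨mem_minGen_of_powGen hS (add_mem_powGen (huS i) ham.1),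
      mem_minGen_of_powGen hS (add_mem_powGen (huS i) hbm.1), ?_, ?_, ?_⟩
    · rw [← hu, ← hv, hu, hv, mlcm_add_left]
      intro t
      exact Nat.add_le_add_left (hadv t) _
    · rw [← hu, ← hv, hu, hv, mlcm_add_left]
      intro t
      exact Nat.add_le_add_left (hbdv t) _
    · rw [mlcm_add_left, mdeg_add, hdeg, hS c (huS i)]
      ring
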